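/- Let (R, Ad_Γ) be a graded von Neumann algebra with center Z(R) satisfying Z(R) ∩ R^(0) = ℂI (i.e., (R, Ad_Γ) is central). Then either Z(R) = ℂI, or there exists a self-adjoint unitary b ∈ Z(R) ∩ R^(1) such that Z(R) ∩ R^(1) = ℂb. -/

import Mathlib

noncomputable section

variable {H : Type*} [NormedAddCommGroup H] [InnerProductSpace ℂ H] [CompleteSpace H]

/-- A self-adjoint unitary operator. -/
def IsSAU (Γ : H →L[ℂ] H) : Prop := star Γ = Γ ∧ Γ * Γ = 1

/-- The even part of a graded set of operators. -/
def evenPart (R : Set (H →L[ℂ] H)) (Γ : H →L[ℂ] H) : Set (H →L[ℂ] H) :=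
  {x | x ∈ R ∧ Γ * x * Γ = x}

/-- The odd part of a graded set of operators. -/
def oddPart (R : Set (H →L[ℂ] H)) (Γ : H →L[ℂ] H) : Set (H →L[ℂ] H) :=
  {x | x ∈ R ∧ Γ * x * Γ = -x}

/-- The center of a set of operators. -/
def centerSet (R : Set (H →L[ℂ] H)) : Set (H →L[ℂ] H) :=
  {x | x ∈ R ∧ ∀ y ∈ R, x * y = y * x}

/-- An (orthogonal) projection operator. -/
def IsProjOp (e : H →L[ℂ] H) : Prop := e * e = e ∧ star e = e

/-- `e` is a subprojection of `f`. -/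
def SubProj (e f : H →L[ℂ] H) : Prop := e * f = e ∧ f * e = e

/-- Murray–von Neumann equivalence of projections relative to `M`. -/
def MvNEquiv (M : Set (H →L[ℂ] H)) (e f : H →L[ℂ] H) : Prop :=
  ∃ v ∈ M, star v * v = e ∧ v * star v = f

/-- `e` is finite relative to `M`. -/
def FiniteProj (M : Set (H →L[ℂ] H)) (e : H →L[ℂ] H) : Prop :=
  ∀ f ∈ M, IsProjOp f → SubProj f e → MvNEquiv M f e → f = e

/-- `e` is an abelian projection relative to `M`: the corner `eMe` is commutative. -/
def AbelianProj (M : Set (H →L[ℂ] H)) (e : H →L[ℂ] H) : Prop :=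
  ∀ x ∈ M, ∀ y ∈ M, (e * x * e) * (e * y * e) = (e * y * e) * (e * x * e)

/-- A von Neumann algebra (given as a set) is of type III: no nonzero finite projections. -/
def TypeIII (M : Set (H →L[ℂ] H)) : Prop :=
  ∀ e ∈ M, IsProjOp e → FiniteProj M e → e = 0

/-- Type II₁ : finite with no nonzero abelian projections. -/
def TypeII1 (M : Set (H →L[ℂ] H)) : Prop :=
  FiniteProj M 1 ∧ ∀ e ∈ M, IsProjOp e → AbelianProj M e → e = 0

/-- Type I_n : the identity is the sum of `n` orthogonal, mutually equivalent
abelian projections. -/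
def TypeI (M : Set (H →L[ℂ] H)) (n : Cardinal) : Prop :=
  ∃ (ι : Type) (E : ι → H →L[ℂ] H), Cardinal.mk ι = n ∧
    (∀ a, E a ∈ M ∧ IsProjOp (E a) ∧ AbelianProj M (E a)) ∧
    (Pairwise fun a b => E a * E b = 0) ∧
    (∀ a b, MvNEquiv M (E a) (E b)) ∧
    (∀ v : H, HasSum (fun a => (E a) v) v)

/-- The scalar operators. -/
def scalarOps (H : Type*) [NormedAddCommGroup H] [InnerProductSpace ℂ H] [CompleteSpace H] :
    Set (H →L[ℂ] H) := Set.range fun c : ℂ => c • (1 : H →L[ℂ] H)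

/-- `M` is a factor. -/
def IsFactor (M : Set (H →L[ℂ] H)) : Prop := centerSet M = scalarOps H

/-- `R` is graded by the self-adjoint unitary `Γ`. -/
def GradedBy (R : Set (H →L[ℂ] H)) (Γ : H →L[ℂ] H) : Prop :=
  IsSAU Γ ∧ ∀ x ∈ R, Γ * x * Γ ∈ R

/-- The von Neumann algebra generated by a (star-closed, unital) set:
its double commutant. -/
def genVN (S : Set (H →L[ℂ] H)) : Set (H →L[ℂ] H) :=
  Set.centralizer (Set.centralizer S)

/-- `c` is the central support of `T` in `M`. -/
def IsCentralSupport (M : Set (H →L[ℂ] H)) (T c : H →L[ℂ] H) : Prop :=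
  c ∈ centerSet M ∧ IsProjOp c ∧ c * T = T ∧
    ∀ d ∈ centerSet M, IsProjOp d → d * T = T → c * d = c

/-- for a central graded von Neumann algebra, either `Z(R) = ℂ1` or
`Z(R) ∩ R¹ = ℂb` for some odd self-adjoint unitary `b ∈ Z(R)`. -/
theorem stmt_15 (R : VonNeumannAlgebra H) (Γ : H →L[ℂ] H) (hΓ : IsSAU Γ)
    (hinv : ∀ x ∈ R, Γ * x * Γ ∈ R)
    (hcentral : centerSet (R : Set (H →L[ℂ] H)) ∩
      evenPart (R : Set (H →L[ℂ] H)) Γ = scalarOps H) :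
    centerSet (R : Set (H →L[ℂ] H)) = scalarOps H ∨
    ∃ b ∈ centerSet (R : Set (H →L[ℂ] H)) ∩ oddPart (R : Set (H →L[ℂ] H)) Γ,
      star b = b ∧ b * b = 1 ∧
      centerSet (R : Set (H →L[ℂ] H)) ∩ oddPart (R : Set (H →L[ℂ] H)) Γ =
        Set.range fun c : ℂ => c • b := by
  classical
  obtain ⟨hΓs, hΓ2⟩ := hΓ
  have hGG : ∀ x : H →L[ℂ] H, Γ * (Γ * x) = x := fun x => by
    rw [← mul_assoc, hΓ2, one_mul]
  have hR_smul : ∀ (c : ℂ), ∀ x ∈ (R : Set (H →L[ℂ] H)), c • x ∈ (R : Set (H →L[ℂ] H)) :=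
    fun c x hx => show c • x ∈ R.toStarSubalgebra from SMulMemClass.smul_mem c hx
  set Z := centerSet (R : Set (H →L[ℂ] H)) with hZdef
  set O := oddPart (R : Set (H →L[ℂ] H)) Γ with hOdef
  -- closure properties of the center
  have hZ_mul : ∀ a ∈ Z, ∀ b ∈ Z, a * b ∈ Z := by
    rintro a ⟨haR, hac⟩ b ⟨hbR, hbc⟩
    exact ⟨mul_mem haR hbR, fun y hy => by
      rw [mul_assoc, hbc y hy, ← mul_assoc, hac y hy, mul_assoc]⟩
  have hZ_smul : ∀ (c : ℂ), ∀ a ∈ Z, c • a ∈ Z := by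
    rintro c a ⟨haR, hac⟩
    exact ⟨hR_smul c _ haR, fun y hy => by
      rw [smul_mul_assoc, mul_smul_comm, hac y hy]⟩
  have hZ_add : ∀ a ∈ Z, ∀ b ∈ Z, a + b ∈ Z := by
    rintro a ⟨haR, hac⟩ b ⟨hbR, hbc⟩
    exact ⟨add_mem haR hbR, fun y hy => by
      rw [add_mul, mul_add, hac y hy, hbc y hy]⟩
  have hZ_sub : ∀ a ∈ Z, ∀ b ∈ Z, a - b ∈ Z := by
    rintro a ⟨haR, hac⟩ b ⟨hbR, hbc⟩
    exact ⟨sub_mem haR hbR, fun y hy => by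
      rw [sub_mul, mul_sub, hac y hy, hbc y hy]⟩
  have hZ_star : ∀ a ∈ Z, star a ∈ Z := by
    rintro a ⟨haR, hac⟩
    refine ⟨star_mem haR, fun y hy => ?_⟩
    have h := congrArg star (hac (star y) (star_mem hy))
    simpa [star_mul] using h.symm
  have hZ_conj : ∀ z ∈ Z, Γ * z * Γ ∈ Z := by
    rintro z ⟨hzR, hzc⟩
    refine ⟨hinv z hzR, fun y hy => ?_⟩
    have key := hzc (Γ * y * Γ) (hinv y hy)
    have h2 := congrArg (fun w => Γ * w * Γ) key
    simpa [mul_assoc, hGG, hΓ2] using h2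
  -- closure properties of the odd part
  have hO_smul : ∀ (c : ℂ), ∀ a ∈ O, c • a ∈ O := by
    rintro c a ⟨haR, hao⟩
    exact ⟨hR_smul c _ haR, by
      rw [mul_smul_comm, smul_mul_assoc, hao, smul_neg]⟩
  have hO_add : ∀ a ∈ O, ∀ b ∈ O, a + b ∈ O := by
    rintro a ⟨haR, hao⟩ b ⟨hbR, hbo⟩
    exact ⟨add_mem haR hbR, by
      rw [mul_add, add_mul, hao, hbo, neg_add]⟩
  have hO_sub : ∀ a ∈ O, ∀ b ∈ O, a - b ∈ O := by
    rintro a ⟨haR, hao⟩ b ⟨hbR, hbo⟩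
    exact ⟨sub_mem haR hbR, by
      rw [mul_sub, sub_mul, hao, hbo, neg_sub, neg_sub_neg]⟩
  have hO_star : ∀ a ∈ O, star a ∈ O := by
    rintro a ⟨haR, hao⟩
    refine ⟨star_mem haR, ?_⟩
    have h := congrArg star hao
    simpa [star_mul, hΓs, mul_assoc] using h
  -- product of two odd elements is even
  have hOO : ∀ a ∈ O, ∀ b ∈ O, Γ * (a * b) * Γ = a * b := by
    rintro a ⟨-, hao⟩ b ⟨-, hbo⟩
    have h : Γ * (a * b) * Γ = (Γ * a * Γ) * (Γ * b * Γ) := by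
      simp [mul_assoc, hGG, hΓ2]
    rw [h, hao, hbo, neg_mul_neg]
  -- decomposition into even and odd parts
  have hdecomp : ∀ z ∈ Z,
      ((2:ℂ)⁻¹ • (z - Γ * z * Γ)) ∈ Z ∩ O ∧
      ((2:ℂ)⁻¹ • (z + Γ * z * Γ)) ∈ Z ∩ evenPart (R : Set (H →L[ℂ] H)) Γ ∧
      (2:ℂ)⁻¹ • (z + Γ * z * Γ) + (2:ℂ)⁻¹ • (z - Γ * z * Γ) = z := by
    intro z hz
    have hconjZ := hZ_conj z hz
    have hzR : z ∈ (R : Set (H →L[ℂ] H)) := hz.1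
    have hGzG : Γ * (Γ * z * Γ) * Γ = z := by simp [mul_assoc, hGG, hΓ2]
    refine ⟨⟨hZ_smul _ _ (hZ_sub z hz _ hconjZ), ?_⟩,
      ⟨hZ_smul _ _ (hZ_add z hz _ hconjZ),
        ⟨hR_smul _ _ (add_mem hzR (hinv z hzR)), ?_⟩⟩, ?_⟩
    · refine ⟨hR_smul _ _ (sub_mem hzR (hinv z hzR)), ?_⟩
      rw [mul_smul_comm, smul_mul_assoc, mul_sub, sub_mul, hGzG, ← smul_neg, neg_sub]
    · rw [mul_smul_comm, smul_mul_assoc, mul_add, add_mul, hGzG, add_comm]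
    · rw [← smul_add]
      have : z + Γ * z * Γ + (z - Γ * z * Γ) = (2:ℂ) • z := by
        rw [two_smul]; abel
      rw [this, smul_smul]
      norm_num
  by_cases hodd0 : ∀ z ∈ Z ∩ O, z = (0 : H →L[ℂ] H)
  · -- the center is trivial
    left
    ext x
    constructor
    · intro hx
      obtain ⟨h1, h2, h3⟩ := hdecomp x hx
      rw [← h3, hodd0 _ h1, add_zero]
      exact hcentral ▸ h2
    · intro hx
      have hx' : x ∈ Z ∩ evenPart (R : Set (H →L[ℂ] H)) Γ := hcentral.symm ▸ hx
      exact hx'.1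
  · right
    push_neg at hodd0
    obtain ⟨z, hzZO, hzne⟩ := hodd0
    have hstarZO : ∀ a ∈ Z ∩ O, star a ∈ Z ∩ O :=
      fun a ha => ⟨hZ_star a ha.1, hO_star a ha.2⟩
    have hsmulZO : ∀ (c : ℂ), ∀ a ∈ Z ∩ O, c • a ∈ Z ∩ O :=
      fun c a ha => ⟨hZ_smul c a ha.1, hO_smul c a ha.2⟩
    -- produce a nonzero self-adjoint odd central element
    obtain ⟨b1, hb1ZO, hb1s, hb1ne⟩ :
        ∃ b1, b1 ∈ Z ∩ O ∧ star b1 = b1 ∧ b1 ≠ 0 := by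
      by_cases h1 : z + star z = 0
      · refine ⟨Complex.I • (z - star z), hsmulZO _ _
          ⟨hZ_sub z hzZO.1 _ (hZ_star z hzZO.1), hO_sub z hzZO.2 _ (hO_star z hzZO.2)⟩,
          ?_, ?_⟩
        · rw [star_smul, star_sub, star_star, Complex.star_def, Complex.conj_I,
            neg_smul, ← smul_neg, neg_sub]
        · have hzs : star z = -z := eq_neg_of_add_eq_zero_right h1
          rw [hzs, sub_neg_eq_add]
          intro hcon
          apply hzne
          have h2 : z + z = 0 := by
            have := congrArg (fun w => (-Complex.I) • w) hcon
            simpa [smul_smul, Complex.I_mul_I] using this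
          have := congrArg (fun w => ((2:ℂ))⁻¹ • w) h2
          simpa [smul_add, two_smul] using by
            have h3 : ((2:ℂ))⁻¹ • (z + z) = z := by
              rw [← two_smul ℂ z, smul_smul]; norm_num
            rw [h2] at h3
            simpa using h3.symm
      · exact ⟨z + star z,
          ⟨hZ_add z hzZO.1 _ (hZ_star z hzZO.1), hO_add z hzZO.2 _ (hO_star z hzZO.2)⟩,
          by rw [star_add, star_star, add_comm], h1⟩
    -- b1 * b1 is a scalar
    have hb1sq : b1 * b1 ∈ Z ∩ evenPart (R : Set (H →L[ℂ] H)) Γ :=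
      ⟨hZ_mul _ hb1ZO.1 _ hb1ZO.1,
        ⟨mul_mem hb1ZO.1.1 hb1ZO.1.1, hOO _ hb1ZO.2 _ hb1ZO.2⟩⟩
    obtain ⟨c, hc⟩ : b1 * b1 ∈ scalarOps H := hcentral ▸ hb1sq
    -- hc : c • 1 = b1 * b1 ; find the value of c
    obtain ⟨v, hv⟩ : ∃ v, b1 v ≠ 0 := by
      by_contra h
      push_neg at h
      exact hb1ne (ContinuousLinearMap.ext fun v => by simp [h v])
    have hv0 : v ≠ 0 := fun h => hv (by simp [h])
    have hnv : (‖v‖ : ℂ) ≠ 0 := by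
      exact_mod_cast Complex.ofReal_ne_zero.mpr (norm_ne_zero_iff.mpr hv0)
    have hadj : ContinuousLinearMap.adjoint b1 = b1 := by
      rw [← ContinuousLinearMap.star_eq_adjoint, hb1s]
    have hcval : c * (‖v‖ : ℂ) ^ 2 = (‖b1 v‖ : ℂ) ^ 2 := by
      have h1 : inner (𝕜 := ℂ) v ((b1 * b1) v) = ((‖b1 v‖ : ℂ)) ^ 2 := by
        calc inner (𝕜 := ℂ) v ((b1 * b1) v)
            = inner (𝕜 := ℂ) v (ContinuousLinearMap.adjoint b1 (b1 v)) := by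
              rw [hadj, ContinuousLinearMap.mul_apply]
          _ = inner (𝕜 := ℂ) (b1 v) (b1 v) :=
              ContinuousLinearMap.adjoint_inner_right b1 _ _
          _ = ((‖b1 v‖ : ℂ)) ^ 2 := inner_self_eq_norm_sq_to_K (𝕜 := ℂ) (b1 v)
      rw [← hc] at h1
      simpa [inner_smul_right, inner_self_eq_norm_sq_to_K, mul_comm] using h1
    set t : ℝ := ‖b1 v‖ / ‖v‖ with ht
    have htpos : 0 < t := div_pos (norm_pos_iff.mpr hv) (norm_pos_iff.mpr hv0)
    have htne : ((t : ℝ) : ℂ) ≠ 0 := Complex.ofReal_ne_zero.mpr (ne_of_gt htpos)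
    have hct : c = ((t : ℝ) : ℂ) ^ 2 := by
      rw [ht]
      push_cast
      rw [div_pow, eq_div_iff (pow_ne_zero 2 hnv)]
      exact hcval
    set b : H →L[ℂ] H := ((t : ℝ) : ℂ)⁻¹ • b1 with hb
    have hbZO : b ∈ Z ∩ O := hsmulZO _ _ hb1ZO
    have hbs : star b = b := by
      rw [hb, star_smul, hb1s, star_inv₀, Complex.star_def, Complex.conj_ofReal]
    have hbb : b * b = 1 := by
      rw [hb, smul_mul_smul_comm, ← hc, smul_smul, hct]
      rw [show ((t : ℝ) : ℂ)⁻¹ * ((t : ℝ) : ℂ)⁻¹ * ((t : ℝ) : ℂ) ^ 2 = 1 by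
        field_simp]
      exact one_smul ℂ (1 : H →L[ℂ] H)
    refine ⟨b, hbZO, hbs, hbb, ?_⟩
    ext x
    constructor
    · intro hx
      have hxb : x * b ∈ Z ∩ evenPart (R : Set (H →L[ℂ] H)) Γ :=
        ⟨hZ_mul _ hx.1 _ hbZO.1, ⟨mul_mem hx.1.1 hbZO.1.1, hOO _ hx.2 _ hbZO.2⟩⟩
      obtain ⟨d, hd⟩ : x * b ∈ scalarOps H := hcentral ▸ hxb
      refine ⟨d, ?_⟩
      show d • b = x
      have : d • b = (x * b) * b := by
        rw [← hd, smul_mul_assoc, one_mul]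
      rw [this, mul_assoc, hbb, mul_one]
    · rintro ⟨d, rfl⟩
      exact hsmulZO d b hbZO
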